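/- Let C be an F[x]-submodule of V = R_1 × ⋯ × R_ℓ generated by elements g_1, …, g_ρ ∈ V, and for each 1 ≤ i ≤ ℓ let g_i(x) be the monic gcd in F[x] of x^{m_i} − λ_i together with polynomial representatives of π_i(g_1), …, π_i(g_ρ). Suppose the polynomials (x^{m_1} − λ_1)/g_1(x), …, (x^{m_ℓ} − λ_ℓ)/g_ℓ(x) are pairwise coprime in F[x]. Then for every index i and every a ∈ π_i(C), the tuple of V having a in the i-th coordinate and 0 in all other coordinates belongs to C. -/

import Mathlib

/-!
STATEMENT 7: under the pairwise coprimality of the (x^{mᵢ} − λᵢ)/gᵢ(x), for every i and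
every a ∈ πᵢ(C), the tuple with a in the i-th coordinate and 0 elsewhere belongs to C.
-/

open Polynomial

theorem stmt7 (F : Type*) [Field F] [Fintype F]
    (ℓ : ℕ) (hℓ : 1 ≤ ℓ)
    (m : Fin ℓ → ℕ) (hm : ∀ i, 1 ≤ m i)
    (lam : Fin ℓ → F) (hlam : ∀ i, lam i ≠ 0)
    (f : Fin ℓ → Polynomial F) (hf : ∀ i, f i = X ^ (m i) - C (lam i))
    (ρ : ℕ) (gen : Fin ρ → Π i, Polynomial F ⧸ Ideal.span {f i})
    (Ccode : Submodule (Polynomial F) (Π i, Polynomial F ⧸ Ideal.span {f i}))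
    (hC : Ccode = Submodule.span (Polynomial F) (Set.range gen))
    (g : Fin ℓ → Polynomial F)
    (hgmonic : ∀ i, (g i).Monic)
    (hgdvd : ∀ i, g i ∣ f i)
    (hgspan : ∀ i, Submodule.map (LinearMap.proj i :
        (Π j, Polynomial F ⧸ Ideal.span {f j}) →ₗ[Polynomial F] Polynomial F ⧸ Ideal.span {f i})
        Ccode
      = Submodule.span (Polynomial F) {Ideal.Quotient.mk (Ideal.span {f i}) (g i)})
    (hcop : ∀ i j, i ≠ j → IsCoprime (f i / g i) (f j / g j)) :
    ∀ i : Fin ℓ, ∀ a ∈ Submodule.map (LinearMap.proj i :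
        (Π j, Polynomial F ⧸ Ideal.span {f j}) →ₗ[Polynomial F] Polynomial F ⧸ Ideal.span {f i})
        Ccode,
      Pi.single i a ∈ Ccode := by
  intro i a ha
  obtain ⟨c, hc, hca⟩ := ha
  have hgf : ∀ j, g j * (f j / g j) = f j := fun j =>
    EuclideanDomain.mul_div_cancel' (hgmonic j).ne_zero (hgdvd j)
  have hcoord : ∀ j, ∃ s : Polynomial F,
      c j = s • Ideal.Quotient.mk (Ideal.span {f j}) (g j) := by
    intro j
    have : c j ∈ Submodule.span (Polynomial F)
        {Ideal.Quotient.mk (Ideal.span {f j}) (g j)} := by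
      rw [← hgspan j]; exact ⟨c, hc, rfl⟩
    obtain ⟨t, ht⟩ := Submodule.mem_span_singleton.mp this
    exact ⟨t, ht.symm⟩
  choose s hs using hcoord
  set e : Polynomial F := ∏ j ∈ Finset.univ.erase i, (f j / g j) with he
  have hcopie : IsCoprime (f i / g i) e := by
    apply IsCoprime.prod_right
    intro j hj
    exact hcop i j (Finset.ne_of_mem_erase hj).symm
  obtain ⟨p, q, hpq⟩ := hcopie
  have hsmul : ∀ (r : Polynomial F) (j : Fin ℓ) (x : Polynomial F),
      r • Ideal.Quotient.mk (Ideal.span {f j}) x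
        = Ideal.Quotient.mk (Ideal.span {f j}) (r * x) := by
    intro r j x
    rfl
  have key : Pi.single i a = (q * e) • c := by
    funext j
    by_cases hji : j = i
    · subst hji
      have hcj : a = c j := hca.symm
      rw [Pi.single_eq_same, Pi.smul_apply, hcj, hs j, smul_smul, hsmul, hsmul]
      rw [Ideal.Quotient.eq, Ideal.mem_span_singleton]
      exact ⟨s j * p, by linear_combination (-(s j * g j)) * hpq + (s j * p) * (hgf j)⟩
    · have hje : j ∈ Finset.univ.erase i := Finset.mem_erase.mpr ⟨hji, Finset.mem_univ j⟩
      obtain ⟨e', he'⟩ := Finset.dvd_prod_of_mem (fun j => f j / g j) hje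
      have he2 : e = f j / g j * e' := he'
      rw [Pi.single_eq_of_ne hji, Pi.smul_apply, hs j, smul_smul, hsmul]
      symm
      rw [Ideal.Quotient.eq_zero_iff_mem, Ideal.mem_span_singleton]
      exact ⟨q * e' * s j, by
        linear_combination (q * s j * g j) * he2 + (q * e' * s j) * (hgf j)⟩
  rw [key]
  exact Submodule.smul_mem _ _ hc
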